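/- Let F have characteristic 0, fix 1 ≤ n₁ < n₂ ≤ n, and let Δ̃ = Σ_{i=1}^{n₁} x_i∂_{y_i} − Σ_{r=n₁+1}^{n₂} ∂_{x_r}∂_{y_r} + Σ_{s=n₂+1}^{n} y_s∂_{x_s} act on A = F[x₁,...,xₙ,y₁,...,yₙ]. Define the linear operator T on monomials by T(x^α y^β) = Σ_{i≥0} [ (x_{n₁+1} y_{n₁+1})^i (Δ̃ + ∂_{x_{n₁+1}}∂_{y_{n₁+1}})^i (x^α y^β) ] / [ Π_{r=1}^{i} (α_{n₁+1}+r)(β_{n₁+1}+r) ]. Then for every monomial x^α y^β with α_{n₁+1}·β_{n₁+1} = 0, we have Δ̃(T(x^α y^β)) = 0; i.e., T(x^α y^β) is a harmonic polynomial for Δ̃. -/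

import Mathlib

set_option linter.unusedSectionVars false
set_option maxHeartbeats 1000000

open MvPolynomial

namespace Stmt5Aux

variable {σ : Type*} [Fintype σ] [DecidableEq σ] {R : Type*} [CommSemiring R]

lemma pderiv_pderiv_comm (u t : σ) (f : MvPolynomial σ R) :
    pderiv u (pderiv t f) = pderiv t (pderiv u f) := by
  induction f using MvPolynomial.induction_on' with
  | monomial s c =>
    rcases eq_or_ne u t with rfl | h
    · rfl
    · simp only [pderiv_monomial]
      rw [tsub_right_comm]
      congr 1
      have h1 : ((s - Finsupp.single t 1 : σ →₀ ℕ)) u = s u := by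
        rw [Finsupp.tsub_apply, Finsupp.single_apply, if_neg (by simpa using h.symm)]
        simp
      have h2 : ((s - Finsupp.single u 1 : σ →₀ ℕ)) t = s t := by
        rw [Finsupp.tsub_apply, Finsupp.single_apply, if_neg (by simpa using h)]
        simp
      rw [h1, h2]; ring
  | add f g hf hg => simp [map_add, hf, hg]

/-- weighted degree of an exponent vector -/
def wdeg (w : σ → ℕ) (s : σ →₀ ℕ) : ℕ := ∑ j, w j * s j

lemma wdeg_add (w : σ → ℕ) (s t : σ →₀ ℕ) : wdeg w (s + t) = wdeg w s + wdeg w t := by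
  simp [wdeg, Finsupp.add_apply, mul_add, Finset.sum_add_distrib]

lemma wdeg_single (w : σ → ℕ) (j : σ) (m : ℕ) : wdeg w (Finsupp.single j m) = w j * m := by
  rw [wdeg, Finset.sum_eq_single j]
  · simp
  · intro i _ hij
    simp [Finsupp.single_apply, Ne.symm hij]
  · simp

lemma wdeg_sub_single_le (w : σ → ℕ) (s : σ →₀ ℕ) (j : σ) :
    wdeg w (s - Finsupp.single j 1) ≤ wdeg w s := by
  apply Finset.sum_le_sum
  intro i _
  exact Nat.mul_le_mul_left _ (by simp [Finsupp.tsub_apply])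

lemma wdeg_sub_single_lt (w : σ → ℕ) (s : σ →₀ ℕ) (j : σ) (hj : w j = 1) (hs : s j ≠ 0) :
    wdeg w (s - Finsupp.single j 1) < wdeg w s := by
  have hle : Finsupp.single j 1 ≤ s := by
    rw [Finsupp.single_le_iff]; omega
  have h := tsub_add_cancel_of_le hle
  calc wdeg w (s - Finsupp.single j 1) < wdeg w (s - Finsupp.single j 1) + 1 := Nat.lt_succ_self _
  _ = wdeg w (s - Finsupp.single j 1) + wdeg w (Finsupp.single j 1) := by
      rw [wdeg_single, hj, mul_one]
  _ = wdeg w s := by rw [← wdeg_add, h]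

/-- Euler identity for a monomial. -/
lemma euler_monomial {F : Type*} [Field F] [CharZero F] (q : σ) (s : σ →₀ ℕ) :
    (X q : MvPolynomial σ F) * (pderiv q (monomial s (1 : F))) =
      ((s q : F)) • monomial s 1 := by
  rw [pderiv_monomial, one_mul]
  by_cases h : s q = 0
  · simp [h]
  · have hle : Finsupp.single q 1 ≤ s := by rw [Finsupp.single_le_iff]; omega
    rw [show (X q : MvPolynomial σ F) = X q ^ 1 by rw [pow_one], ← monomial_single_add,
      add_tsub_cancel_of_le hle, smul_monomial, smul_eq_mul, mul_one]

end Stmt5Aux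

namespace Stmt5

open Stmt5Aux

variable (F : Type*) [Field F] [CharZero F] (n n₁ n₂ : ℕ)

abbrev A := MvPolynomial (Fin n ⊕ Fin n) F

noncomputable def xv (i : Fin n) : A F n := X (Sum.inl i)
noncomputable def yv (i : Fin n) : A F n := X (Sum.inr i)
noncomputable def mul (f : A F n) : Module.End F (A F n) := LinearMap.mulLeft F f
noncomputable def pdx (i : Fin n) : Module.End F (A F n) :=
  (pderiv (Sum.inl i : Fin n ⊕ Fin n)).toLinearMap
noncomputable def pdy (i : Fin n) : Module.End F (A F n) :=
  (pderiv (Sum.inr i : Fin n ⊕ Fin n)).toLinearMap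

/-- The twisted Laplace operator
`Δ̃ = Σ_{i=1}^{n₁} x_i∂_{y_i} − Σ_{r=n₁+1}^{n₂} ∂_{x_r}∂_{y_r} + Σ_{s=n₂+1}^{n} y_s∂_{x_s}`
(indices 0-based). -/
noncomputable def lap : Module.End F (A F n) :=
  (∑ i ∈ Finset.univ.filter (fun i : Fin n => (i : ℕ) < n₁),
      mul F n (xv F n i) * pdy F n i)
  - (∑ r ∈ Finset.univ.filter (fun r : Fin n => n₁ ≤ (r : ℕ) ∧ (r : ℕ) < n₂),
      pdx F n r * pdy F n r)
  + ∑ s ∈ Finset.univ.filter (fun s : Fin n => n₂ ≤ (s : ℕ)),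
      mul F n (yv F n s) * pdx F n s

/-- The weight function: 1 on `x_i` for `i ≥ n₁`, 1 on `y_i` for `i < n₂`, 0 otherwise. -/
def wt : Fin n ⊕ Fin n → ℕ :=
  Sum.elim (fun i => if n₁ ≤ (i : ℕ) then 1 else 0) (fun i => if (i : ℕ) < n₂ then 1 else 0)

/-- `lap` with the `r = n₁` middle term removed; equals `lap + pdx ⟨n₁⟩ * pdy ⟨n₁⟩`. -/
noncomputable def lapD (hn : n₁ < n) : Module.End F (A F n) :=
  (∑ i ∈ Finset.univ.filter (fun i : Fin n => (i : ℕ) < n₁),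
      mul F n (xv F n i) * pdy F n i)
  - (∑ r ∈ (Finset.univ.filter (fun r : Fin n => n₁ ≤ (r : ℕ) ∧ (r : ℕ) < n₂)).erase ⟨n₁, hn⟩,
      pdx F n r * pdy F n r)
  + ∑ s ∈ Finset.univ.filter (fun s : Fin n => n₂ ≤ (s : ℕ)),
      mul F n (yv F n s) * pdx F n s

lemma lap_add_eq (h₁₂ : n₁ < n₂) (hn : n₁ < n) :
    lap F n n₁ n₂ + pdx F n ⟨n₁, hn⟩ * pdy F n ⟨n₁, hn⟩ = lapD F n n₁ n₂ hn := by
  have hp : (⟨n₁, hn⟩ : Fin n) ∈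
      Finset.univ.filter (fun r : Fin n => n₁ ≤ (r : ℕ) ∧ (r : ℕ) < n₂) := by
    simp [h₁₂]
  rw [lap, lapD, ← Finset.add_sum_erase _ _ hp]
  abel

lemma commute_mulLeft_mulLeft (f g : A F n) :
    Commute (LinearMap.mulLeft F f) (LinearMap.mulLeft F g) := by
  have h : ∀ a b : A F n, LinearMap.mulLeft F a * LinearMap.mulLeft F b
      = LinearMap.mulLeft F (a * b) := fun a b => by
    rw [LinearMap.mulLeft_mul, Module.End.mul_eq_comp]
  unfold Commute SemiconjBy
  rw [h, h, mul_comm]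

lemma commute_pderiv_mulLeft {u j : Fin n ⊕ Fin n} (h : u ≠ j) :
    Commute ((pderiv u).toLinearMap : Module.End F (A F n))
      (LinearMap.mulLeft F (X j : A F n)) := by
  apply LinearMap.ext
  intro f
  simp only [Module.End.mul_apply, Derivation.coeFn_coe, LinearMap.mulLeft_apply,
    pderiv_mul, pderiv_X_of_ne (Ne.symm h)]
  ring

lemma commute_pderiv_pderiv (u j : Fin n ⊕ Fin n) :
    Commute ((pderiv u).toLinearMap : Module.End F (A F n)) (pderiv j).toLinearMap := by
  apply LinearMap.ext
  intro f
  simpa only [Module.End.mul_apply, Derivation.coeFn_coe] using pderiv_pderiv_comm u j f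

lemma commute_lapD_mulLeft (h₂ : n₂ ≤ n) (h₁₂ : n₁ < n₂) (hn : n₁ < n) (q : Fin n ⊕ Fin n)
    (hq : q = Sum.inl ⟨n₁, hn⟩ ∨ q = Sum.inr ⟨n₁, hn⟩) :
    Commute (lapD F n n₁ n₂ hn) (LinearMap.mulLeft F (X q : A F n)) := by
  rw [lapD]
  apply Commute.add_left
  apply Commute.sub_left
  · apply Commute.sum_left
    intro i hi
    rw [Finset.mem_filter] at hi
    refine Commute.mul_left (commute_mulLeft_mulLeft F n _ _) ?_
    show Commute ((pderiv (Sum.inr i)).toLinearMap) _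
    refine commute_pderiv_mulLeft F n ?_
    rcases hq with rfl | rfl
    · simp
    · intro hcon
      have : (i : ℕ) = n₁ := congrArg Fin.val (Sum.inr.inj hcon)
      omega
  · apply Commute.sum_left
    intro r hr
    rw [Finset.mem_erase, Finset.mem_filter] at hr
    have hrne : (r : ℕ) ≠ n₁ := fun h => hr.1 (Fin.ext h)
    refine Commute.mul_left ?_ ?_
    · show Commute ((pderiv (Sum.inl r)).toLinearMap) _
      refine commute_pderiv_mulLeft F n ?_
      rcases hq with rfl | rfl
      · intro hcon
        exact hrne (congrArg Fin.val (Sum.inl.inj hcon))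
      · simp
    · show Commute ((pderiv (Sum.inr r)).toLinearMap) _
      refine commute_pderiv_mulLeft F n ?_
      rcases hq with rfl | rfl
      · simp
      · intro hcon
        exact hrne (congrArg Fin.val (Sum.inr.inj hcon))
  · apply Commute.sum_left
    intro s hs
    rw [Finset.mem_filter] at hs
    have hsgt : n₂ ≤ (s : ℕ) := hs.2
    refine Commute.mul_left (commute_mulLeft_mulLeft F n _ _) ?_
    show Commute ((pderiv (Sum.inl s)).toLinearMap) _
    refine commute_pderiv_mulLeft F n ?_
    rcases hq with rfl | rfl
    · intro hcon
      have : (s : ℕ) = n₁ := congrArg Fin.val (Sum.inl.inj hcon)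
      omega
    · simp

lemma commute_lapD_pderiv (h₂ : n₂ ≤ n) (h₁₂ : n₁ < n₂) (hn : n₁ < n) (q : Fin n ⊕ Fin n)
    (hq : q = Sum.inl ⟨n₁, hn⟩ ∨ q = Sum.inr ⟨n₁, hn⟩) :
    Commute (lapD F n n₁ n₂ hn) ((pderiv q).toLinearMap : Module.End F (A F n)) := by
  rw [lapD]
  apply Commute.add_left
  apply Commute.sub_left
  · apply Commute.sum_left
    intro i hi
    rw [Finset.mem_filter] at hi
    refine Commute.mul_left ?_ ?_
    · show Commute (LinearMap.mulLeft F (X (Sum.inl i) : A F n)) _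
      refine (commute_pderiv_mulLeft F n ?_).symm
      rcases hq with rfl | rfl
      · intro hcon
        have : n₁ = (i : ℕ) := congrArg Fin.val (Sum.inl.inj hcon)
        omega
      · simp
    · exact commute_pderiv_pderiv F n _ _
  · apply Commute.sum_left
    intro r _
    exact Commute.mul_left (commute_pderiv_pderiv F n _ _) (commute_pderiv_pderiv F n _ _)
  · apply Commute.sum_left
    intro s hs
    rw [Finset.mem_filter] at hs
    refine Commute.mul_left ?_ ?_
    · show Commute (LinearMap.mulLeft F (X (Sum.inr s) : A F n)) _
      refine (commute_pderiv_mulLeft F n ?_).symm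
      rcases hq with rfl | rfl
      · simp
      · intro hcon
        have : n₁ = (s : ℕ) := congrArg Fin.val (Sum.inr.inj hcon)
        omega
    · exact commute_pderiv_pderiv F n _ _

lemma wt_le_one (j : Fin n ⊕ Fin n) : wt n n₁ n₂ j ≤ 1 := by
  rcases j with i | i <;> simp only [wt, Sum.elim_inl, Sum.elim_inr] <;> split <;> omega

lemma lapD_pow_monomial (h₁₂ : n₁ < n₂) (h₂ : n₂ ≤ n) (hn : n₁ < n) :
    ∀ (k : ℕ) (s : (Fin n ⊕ Fin n) →₀ ℕ) (c : F), wdeg (wt n n₁ n₂) s < k →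
      ((lapD F n n₁ n₂ hn) ^ k) (monomial s c) = 0 := by
  intro k
  induction k with
  | zero => intro s c h; exact absurd h (Nat.not_lt_zero _)
  | succ k IH =>
    intro s c hs
    rw [pow_succ, Module.End.mul_apply]
    have hA : ∀ u j : Fin n ⊕ Fin n, wt n n₁ n₂ u = 0 → wt n n₁ n₂ j = 1 →
        ((lapD F n n₁ n₂ hn) ^ k)
          ((LinearMap.mulLeft F (X u : A F n) * (pderiv j).toLinearMap :
            Module.End F (A F n)) (monomial s c)) = 0 := by
      intro u j hu hj
      rw [Module.End.mul_apply]
      simp only [Derivation.coeFn_coe, LinearMap.mulLeft_apply, pderiv_monomial]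
      by_cases h : s j = 0
      · simp [h]
      · rw [show (X u : A F n) * monomial (s - Finsupp.single j 1) (c * s j)
            = X u ^ 1 * monomial (s - Finsupp.single j 1) (c * s j) by rw [pow_one],
          ← monomial_single_add]
        apply IH
        rw [wdeg_add, wdeg_single, hu]
        have := wdeg_sub_single_lt (wt n n₁ n₂) s j hj h
        omega
    have hB : ∀ u j : Fin n ⊕ Fin n, wt n n₁ n₂ j = 1 →
        ((lapD F n n₁ n₂ hn) ^ k)
          (((pderiv u).toLinearMap * (pderiv j).toLinearMap :
            Module.End F (A F n)) (monomial s c)) = 0 := by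
      intro u j hj
      rw [Module.End.mul_apply]
      simp only [Derivation.coeFn_coe, pderiv_monomial]
      by_cases h : s j = 0
      · simp [h]
      · apply IH
        have h1 := wdeg_sub_single_le (wt n n₁ n₂) (s - Finsupp.single j 1) u
        have h2 := wdeg_sub_single_lt (wt n n₁ n₂) s j hj h
        omega
    have expand : (lapD F n n₁ n₂ hn) (monomial s c) =
        (∑ i ∈ Finset.univ.filter (fun i : Fin n => (i : ℕ) < n₁),
          (mul F n (xv F n i) * pdy F n i) (monomial s c))
        - (∑ r ∈ (Finset.univ.filter
              (fun r : Fin n => n₁ ≤ (r : ℕ) ∧ (r : ℕ) < n₂)).erase ⟨n₁, hn⟩,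
          (pdx F n r * pdy F n r) (monomial s c))
        + ∑ t ∈ Finset.univ.filter (fun t : Fin n => n₂ ≤ (t : ℕ)),
          (mul F n (yv F n t) * pdx F n t) (monomial s c) := by
      rw [lapD]
      simp [LinearMap.add_apply, LinearMap.sub_apply, LinearMap.sum_apply]
    rw [expand, map_add, map_sub, map_sum, map_sum, map_sum]
    have e1 : ∀ i ∈ Finset.univ.filter (fun i : Fin n => (i : ℕ) < n₁),
        ((lapD F n n₁ n₂ hn) ^ k) ((mul F n (xv F n i) * pdy F n i) (monomial s c)) = 0 := by
      intro i hi
      rw [Finset.mem_filter] at hi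
      exact hA (Sum.inl i) (Sum.inr i)
        (by simp only [wt, Sum.elim_inl]; rw [if_neg]; omega)
        (by simp only [wt, Sum.elim_inr]; rw [if_pos]; omega)
    have e2 : ∀ r ∈ (Finset.univ.filter
          (fun r : Fin n => n₁ ≤ (r : ℕ) ∧ (r : ℕ) < n₂)).erase ⟨n₁, hn⟩,
        ((lapD F n n₁ n₂ hn) ^ k) ((pdx F n r * pdy F n r) (monomial s c)) = 0 := by
      intro r hr
      rw [Finset.mem_erase, Finset.mem_filter] at hr
      exact hB (Sum.inl r) (Sum.inr r)
        (by simp only [wt, Sum.elim_inr]; rw [if_pos]; omega)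
    have e3 : ∀ t ∈ Finset.univ.filter (fun t : Fin n => n₂ ≤ (t : ℕ)),
        ((lapD F n n₁ n₂ hn) ^ k) ((mul F n (yv F n t) * pdx F n t) (monomial s c)) = 0 := by
      intro t ht
      rw [Finset.mem_filter] at ht
      exact hA (Sum.inr t) (Sum.inl t)
        (by simp only [wt, Sum.elim_inr]; rw [if_neg]; omega)
        (by simp only [wt, Sum.elim_inl]; rw [if_pos]; omega)
    rw [Finset.sum_congr rfl e1, Finset.sum_congr rfl e2, Finset.sum_congr rfl e3]
    simp

lemma e_pow (u t : Fin n ⊕ Fin n) (hut : u ≠ t) : ∀ (i : ℕ) (w : A F n),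
    pderiv u (pderiv t ((X u * X t) ^ (i+1) * w)) =
      (X u * X t) ^ (i+1) * pderiv u (pderiv t w)
      + ((i+1 : ℕ) : A F n) * ((X u * X t) ^ i * (X u * pderiv u w + X t * pderiv t w))
      + (((i+1) * (i+1) : ℕ) : A F n) * ((X u * X t) ^ i * w) := by
  have h1 : pderiv t (X u : A F n) = 0 := pderiv_X_of_ne hut
  have h2 : pderiv u (X t : A F n) = 0 := pderiv_X_of_ne (Ne.symm hut)
  have hp1 : pderiv t (X u * X t : A F n) = X u := by
    rw [pderiv_mul, h1, pderiv_X_self]; ring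
  have hp2 : pderiv u (X u * X t : A F n) = X t := by
    rw [pderiv_mul, h2, pderiv_X_self]; ring
  have hdt : ∀ w : A F n, pderiv t ((X u * X t) * w) = X u * w + (X u * X t) * pderiv t w := by
    intro w
    rw [pderiv_mul, hp1]
  have hdu : ∀ w : A F n, pderiv u ((X u * X t) * w) = X t * w + (X u * X t) * pderiv u w := by
    intro w
    rw [pderiv_mul, hp2]
  have hdudt : ∀ w : A F n, pderiv u (pderiv t ((X u * X t) * w))
      = X u * pderiv u w + X t * pderiv t w + w + (X u * X t) * pderiv u (pderiv t w) := by
    intro w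
    rw [hdt, map_add, pderiv_mul, pderiv_mul, pderiv_X_self, hp2]
    ring
  intro i
  induction i with
  | zero =>
    intro w
    rw [zero_add, pow_one, pow_zero, hdudt]
    push_cast
    ring
  | succ i IH =>
    intro w
    have hm : (X u * X t : A F n) ^ (i+1+1) * w = (X u * X t) ^ (i+1) * ((X u * X t) * w) := by
      ring
    rw [hm, IH ((X u * X t) * w), hdudt, hdt, hdu]
    push_cast
    ring

lemma prod_eq_monomial (α β : Fin n → ℕ) :
    (∏ j, xv F n j ^ α j) * ∏ j, yv F n j ^ β j
      = monomial (Finsupp.equivFunOnFinite.symm (Sum.elim α β)) (1 : F) := by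
  set s : (Fin n ⊕ Fin n) →₀ ℕ := Finsupp.equivFunOnFinite.symm (Sum.elim α β) with hs
  rw [← prod_X_pow_eq_monomial, Finset.prod_subset (Finset.subset_univ s.support)
    (fun x _ hx => by
      rw [Finsupp.notMem_support_iff] at hx
      rw [hx, pow_zero])]
  rw [Fintype.prod_sum_type]
  rfl

lemma invariant (h₁₂ : n₁ < n₂) (h₂ : n₂ ≤ n) (hn : n₁ < n) (α β : Fin n → ℕ)
    (hαβ : α ⟨n₁, hn⟩ * β ⟨n₁, hn⟩ = 0) : ∀ i : ℕ,
    (pdx F n ⟨n₁, hn⟩ * pdy F n ⟨n₁, hn⟩)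
        ((lapD F n n₁ n₂ hn ^ i) ((∏ j, xv F n j ^ α j) * ∏ j, yv F n j ^ β j)) = 0 ∧
    (mul F n (xv F n ⟨n₁, hn⟩) * pdx F n ⟨n₁, hn⟩)
        ((lapD F n n₁ n₂ hn ^ i) ((∏ j, xv F n j ^ α j) * ∏ j, yv F n j ^ β j))
      = ((α ⟨n₁, hn⟩ : F)) •
        ((lapD F n n₁ n₂ hn ^ i) ((∏ j, xv F n j ^ α j) * ∏ j, yv F n j ^ β j)) ∧
    (mul F n (yv F n ⟨n₁, hn⟩) * pdy F n ⟨n₁, hn⟩)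
        ((lapD F n n₁ n₂ hn ^ i) ((∏ j, xv F n j ^ α j) * ∏ j, yv F n j ^ β j))
      = ((β ⟨n₁, hn⟩ : F)) •
        ((lapD F n n₁ n₂ hn ^ i) ((∏ j, xv F n j ^ α j) * ∏ j, yv F n j ^ β j)) := by
  intro i
  induction i with
  | zero =>
    simp only [pow_zero, Module.End.one_apply]
    rw [prod_eq_monomial]
    set s : (Fin n ⊕ Fin n) →₀ ℕ := Finsupp.equivFunOnFinite.symm (Sum.elim α β) with hs
    have hsl : s (Sum.inl ⟨n₁, hn⟩) = α ⟨n₁, hn⟩ := rfl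
    have hsr : s (Sum.inr ⟨n₁, hn⟩) = β ⟨n₁, hn⟩ := rfl
    refine ⟨?_, ?_, ?_⟩
    · show (pderiv (Sum.inl (⟨n₁, hn⟩ : Fin n)))
        ((pderiv (Sum.inr (⟨n₁, hn⟩ : Fin n))) (monomial s (1 : F))) = 0
      rw [pderiv_monomial, pderiv_monomial]
      have hco : ((s - Finsupp.single (Sum.inr (⟨n₁, hn⟩ : Fin n)) 1 : (Fin n ⊕ Fin n) →₀ ℕ))
          (Sum.inl (⟨n₁, hn⟩ : Fin n)) = α ⟨n₁, hn⟩ := by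
        rw [Finsupp.tsub_apply, Finsupp.single_apply, if_neg (by simp)]
        simpa using hsl
      rw [hco, hsr, one_mul]
      have : ((β ⟨n₁, hn⟩ : F)) * ((α ⟨n₁, hn⟩ : ℕ) : F) = 0 := by
        rw [← Nat.cast_mul, mul_comm (β ⟨n₁, hn⟩), hαβ, Nat.cast_zero]
      rw [this, monomial_zero]
    · show (X (Sum.inl (⟨n₁, hn⟩ : Fin n)) : A F n)
          * (pderiv (Sum.inl (⟨n₁, hn⟩ : Fin n))) (monomial s (1 : F))
        = ((α ⟨n₁, hn⟩ : F)) • monomial s (1 : F)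
      rw [euler_monomial, hsl]
    · show (X (Sum.inr (⟨n₁, hn⟩ : Fin n)) : A F n)
          * (pderiv (Sum.inr (⟨n₁, hn⟩ : Fin n))) (monomial s (1 : F))
        = ((β ⟨n₁, hn⟩ : F)) • monomial s (1 : F)
      rw [euler_monomial, hsr]
  | succ i IH =>
    set P := lapD F n n₁ n₂ hn with hP
    set w := (P ^ i) ((∏ j, xv F n j ^ α j) * ∏ j, yv F n j ^ β j) with hw
    have hpow : (P ^ (i+1)) ((∏ j, xv F n j ^ α j) * ∏ j, yv F n j ^ β j) = P w := by
      rw [pow_succ', Module.End.mul_apply]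
    have hq : (Sum.inl (⟨n₁, hn⟩ : Fin n) : Fin n ⊕ Fin n) = Sum.inl ⟨n₁, hn⟩ ∨
        (Sum.inl (⟨n₁, hn⟩ : Fin n) : Fin n ⊕ Fin n) = Sum.inr ⟨n₁, hn⟩ := Or.inl rfl
    have hq' : (Sum.inr (⟨n₁, hn⟩ : Fin n) : Fin n ⊕ Fin n) = Sum.inl ⟨n₁, hn⟩ ∨
        (Sum.inr (⟨n₁, hn⟩ : Fin n) : Fin n ⊕ Fin n) = Sum.inr ⟨n₁, hn⟩ := Or.inr rfl
    have cdx : Commute P (pdx F n ⟨n₁, hn⟩) := commute_lapD_pderiv F n n₁ n₂ h₂ h₁₂ hn _ hq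
    have cdy : Commute P (pdy F n ⟨n₁, hn⟩) := commute_lapD_pderiv F n n₁ n₂ h₂ h₁₂ hn _ hq'
    have cmx : Commute P (mul F n (xv F n ⟨n₁, hn⟩)) :=
      commute_lapD_mulLeft F n n₁ n₂ h₂ h₁₂ hn _ hq
    have cmy : Commute P (mul F n (yv F n ⟨n₁, hn⟩)) :=
      commute_lapD_mulLeft F n n₁ n₂ h₂ h₁₂ hn _ hq'
    have swap : ∀ O : Module.End F (A F n), Commute P O → O (P w) = P (O w) := by
      intro O hc
      calc O (P w) = (O * P) w := rfl
      _ = (P * O) w := by rw [hc.eq]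
      _ = P (O w) := rfl
    refine ⟨?_, ?_, ?_⟩
    · rw [hpow, swap _ (cdx.mul_right cdy), IH.1, map_zero]
    · rw [hpow, swap _ (cmx.mul_right cdx), IH.2.1, map_smul]
    · rw [hpow, swap _ (cmy.mul_right cdy), IH.2.2, map_smul]

/-- the operator `T` applied to a monomial `x^α y^β` with
`α_{n₁+1} β_{n₁+1} = 0` yields a `Δ̃`-harmonic polynomial.  Here the sum defining `T`
is finite (taken up to the total degree, beyond which all terms vanish), the
denominators are `Π_{r=1}^{i} (α_{n₁+1}+r)(β_{n₁+1}+r)`, and `n₁+1` corresponds to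
the 0-based index `⟨n₁, _⟩`. -/
theorem lap_T_monomial_eq_zero
    (h₁ : 1 ≤ n₁) (h₁₂ : n₁ < n₂) (h₂ : n₂ ≤ n) (hn : n₁ < n)
    (α β : Fin n → ℕ) (hαβ : α ⟨n₁, hn⟩ * β ⟨n₁, hn⟩ = 0) :
    lap F n n₁ n₂
      (∑ i ∈ Finset.range ((∑ j, α j) + (∑ j, β j) + 1),
        ((∏ r ∈ Finset.range i,
            ((α ⟨n₁, hn⟩ + r + 1) * (β ⟨n₁, hn⟩ + r + 1)) : ℕ) : F)⁻¹ •
          ((xv F n ⟨n₁, hn⟩ * yv F n ⟨n₁, hn⟩) ^ i *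
            (((lap F n n₁ n₂ + pdx F n ⟨n₁, hn⟩ * pdy F n ⟨n₁, hn⟩) ^ i)
              ((∏ j, xv F n j ^ α j) * ∏ j, yv F n j ^ β j)))) = 0 := by
  have hlapD := lap_add_eq F n n₁ n₂ h₁₂ hn
  set p : Fin n := ⟨n₁, hn⟩ with hp
  set V : A F n := (∏ j, xv F n j ^ α j) * ∏ j, yv F n j ^ β j with hV
  set P : Module.End F (A F n) := lapD F n n₁ n₂ hn with hP
  set m : A F n := xv F n p * yv F n p with hmm
  set N : ℕ := (∑ j, α j) + (∑ j, β j) with hN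
  set c : ℕ → F := fun i =>
    ((∏ r ∈ Finset.range i, ((α p + r + 1) * (β p + r + 1)) : ℕ) : F)⁻¹ with hc
  set e : Module.End F (A F n) := pdx F n p * pdy F n p with he
  have hq : (Sum.inl p : Fin n ⊕ Fin n) = Sum.inl p ∨
      (Sum.inl p : Fin n ⊕ Fin n) = Sum.inr p := Or.inl rfl
  have hq' : (Sum.inr p : Fin n ⊕ Fin n) = Sum.inl p ∨
      (Sum.inr p : Fin n ⊕ Fin n) = Sum.inr p := Or.inr rfl
  have cmx : Commute P (mul F n (xv F n p)) := commute_lapD_mulLeft F n n₁ n₂ h₂ h₁₂ hn _ hq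
  have cmy : Commute P (mul F n (yv F n p)) := commute_lapD_mulLeft F n n₁ n₂ h₂ h₁₂ hn _ hq'
  have hPm : ∀ (i : ℕ) (w : A F n), P (m ^ i * w) = m ^ i * P w := by
    intro i w
    have hmul : LinearMap.mulLeft F m = mul F n (xv F n p) * mul F n (yv F n p) := by
      rw [hmm, LinearMap.mulLeft_mul]
      rfl
    have c1 : Commute P (LinearMap.mulLeft F m) := by
      rw [hmul]; exact cmx.mul_right cmy
    have c2 := c1.pow_right i
    rw [LinearMap.pow_mulLeft] at c2
    calc P (m ^ i * w) = P ((LinearMap.mulLeft F (m ^ i)) w) := rfl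
    _ = (P * LinearMap.mulLeft F (m ^ i)) w := rfl
    _ = (LinearMap.mulLeft F (m ^ i) * P) w := by rw [c2.eq]
    _ = m ^ i * P w := rfl
  have hkey : ∀ i : ℕ, e (m ^ (i+1) * ((P ^ (i+1)) V))
      = (((α p + i + 1) * (β p + i + 1) : ℕ) : F) • (m ^ i * ((P ^ (i+1)) V)) := by
    intro i
    obtain ⟨inv1, inv2, inv3⟩ := invariant F n n₁ n₂ h₁₂ h₂ hn α β hαβ (i+1)
    have hne : (Sum.inl p : Fin n ⊕ Fin n) ≠ Sum.inr p := by simp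
    have h := e_pow F n (Sum.inl p) (Sum.inr p) hne i ((P ^ (i+1)) V)
    have egoal : e (m ^ (i+1) * ((P ^ (i+1)) V))
        = pderiv (Sum.inl p) (pderiv (Sum.inr p)
            ((X (Sum.inl p) * X (Sum.inr p) : A F n) ^ (i+1) * ((P ^ (i+1)) V))) := rfl
    rw [egoal, h,
      show pderiv (Sum.inl p) (pderiv (Sum.inr p) ((P ^ (i+1)) V)) = 0 from inv1,
      show (X (Sum.inl p) : A F n) * pderiv (Sum.inl p) ((P ^ (i+1)) V)
        = ((α p : F)) • ((P ^ (i+1)) V) from inv2,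
      show (X (Sum.inr p) : A F n) * pderiv (Sum.inr p) ((P ^ (i+1)) V)
        = ((β p : F)) • ((P ^ (i+1)) V) from inv3]
    have harith : ((α p + i + 1) * (β p + i + 1) : ℕ)
        = (i+1) * (α p + β p) + (i+1) * (i+1) := by
      calc ((α p + i + 1) * (β p + i + 1) : ℕ)
          = α p * β p + ((i+1) * (α p + β p) + (i+1) * (i+1)) := by ring
      _ = (i+1) * (α p + β p) + (i+1) * (i+1) := by rw [hαβ, zero_add]
    rw [harith]
    simp only [smul_eq_C_mul, map_natCast (C : F →+* A F n)]
    push_cast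
    have hXm : (X (Sum.inl p) * X (Sum.inr p) : A F n) = m := rfl
    rw [hXm]
    ring
  have hzero : (P ^ (N+1)) V = 0 := by
    rw [hV, prod_eq_monomial]
    apply lapD_pow_monomial F n n₁ n₂ h₁₂ h₂ hn
    set s : (Fin n ⊕ Fin n) →₀ ℕ := Finsupp.equivFunOnFinite.symm (Sum.elim α β) with hs
    have hle : wdeg (wt n n₁ n₂) s ≤ N := by
      calc wdeg (wt n n₁ n₂) s ≤ ∑ j, s j := by
            apply Finset.sum_le_sum
            intro j _
            calc wt n n₁ n₂ j * s j ≤ 1 * s j :=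
                  Nat.mul_le_mul_right _ (wt_le_one n n₁ n₂ j)
            _ = s j := one_mul _
      _ = N := by
            rw [Fintype.sum_sum_type]
            rfl
    omega
  have hcc : ∀ i : ℕ, c (i+1) * (((α p + i + 1) * (β p + i + 1) : ℕ) : F) = c i := by
    intro i
    have hK : (((α p + i + 1) * (β p + i + 1) : ℕ) : F) ≠ 0 := by
      rw [Nat.cast_ne_zero]
      positivity
    simp only [hc]
    rw [Finset.prod_range_succ, Nat.cast_mul, mul_inv, mul_assoc, inv_mul_cancel₀ hK, mul_one]
  rw [hlapD, show lap F n n₁ n₂ = P - e from eq_sub_of_add_eq hlapD, map_sum]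
  have step : ∀ i ∈ Finset.range (N+1),
      (P - e) (c i • (m ^ i * ((P ^ i) V)))
        = c i • (m ^ i * ((P ^ (i+1)) V)) - c i • (e (m ^ i * ((P ^ i) V))) := by
    intro i _
    rw [LinearMap.sub_apply, map_smul, map_smul, hPm]
    congr 2
    rw [pow_succ', Module.End.mul_apply]
  have hfin : ∑ i ∈ Finset.range (N+1), (P - e) (c i • (m ^ i * ((P ^ i) V))) = 0 := by
    rw [Finset.sum_congr rfl step, Finset.sum_sub_distrib]
    have h1 : ∑ i ∈ Finset.range (N+1), c i • (m ^ i * ((P ^ (i+1)) V))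
        = ∑ i ∈ Finset.range N, c i • (m ^ i * ((P ^ (i+1)) V)) := by
      rw [Finset.sum_range_succ, hzero, mul_zero, smul_zero, add_zero]
    have h2 : ∑ i ∈ Finset.range (N+1), c i • (e (m ^ i * ((P ^ i) V)))
        = ∑ i ∈ Finset.range N, c i • (m ^ i * ((P ^ (i+1)) V)) := by
      rw [Finset.sum_range_succ']
      have hB0 : c 0 • (e (m ^ 0 * ((P ^ 0) V))) = 0 := by
        have inv1 := (invariant F n n₁ n₂ h₁₂ h₂ hn α β hαβ 0).1
        simp only [pow_zero, Module.End.one_apply] at inv1 ⊢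
        rw [one_mul, show e V = 0 from inv1, smul_zero]
      rw [hB0, add_zero]
      apply Finset.sum_congr rfl
      intro i _
      rw [hkey i, smul_smul, hcc i]
    rw [h1, h2, sub_self]
  exact hfin

end Stmt5
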